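/- Let Ω, Ω' ⊆ ℝ² be open sets; let H be twice continuously differentiable on Ω and let G be twice continuously differentiable on Ω'. Suppose that for every (t,y) ∈ Ω' one has (t, G(t,y)) ∈ Ω and H(t, G(t,y)) = y, and that H satisfies equation (B) at the point (t, G(t,y)). Then G satisfies equation (E) on Ω': for every (t,y) ∈ Ω', ∂_yG(t,y) ≠ 0 and ∂_t²G(t,y) + π²·(∂_yG(t,y))⁻⁴·∂_y²G(t,y) = 0. -/

import Mathlib

open Real Set MeasureTheory Filter
open scoped ENNReal

noncomputable section

/-- The partial derivative of `F : ℝ × ℝ → ℝ` in its first (time) variable. -/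
def pdT (F : ℝ × ℝ → ℝ) : ℝ × ℝ → ℝ := fun z => deriv (fun s => F (s, z.2)) z.1

/-- The partial derivative of `F : ℝ × ℝ → ℝ` in its second (space) variable. -/
def pdX (F : ℝ × ℝ → ℝ) : ℝ × ℝ → ℝ := fun z => deriv (fun s => F (z.1, s)) z.2

/-- The iterated partial derivative `∂_t^i ∂_x^j F`. -/
def pdIter (F : ℝ × ℝ → ℝ) (i j : ℕ) : ℝ × ℝ → ℝ := pdT^[i] (pdX^[j] F)

/-- The nonlinear second-order operator appearing in equation (B):
`(∂_x F)² ∂_t² F − 2 (∂_t F)(∂_x F) ∂_t∂_x F + ((∂_t F)² + π² (∂_x F)⁴) ∂_x² F`. -/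
def BExpr (F : ℝ × ℝ → ℝ) (z : ℝ × ℝ) : ℝ :=
  (pdX F z) ^ 2 * pdT (pdT F) z - 2 * pdT F z * pdX F z * pdT (pdX F) z +
    ((pdT F z) ^ 2 + π ^ 2 * (pdX F z) ^ 4) * pdX (pdX F) z

/-- `F` satisfies equation (B) on `Ω`. -/
def SatisfiesB (F : ℝ × ℝ → ℝ) (Ω : Set (ℝ × ℝ)) : Prop := ∀ z ∈ Ω, BExpr F z = 0

/-- `G` satisfies equation (E) on `R`:  `∂_y G ≠ 0` and
`∂_t² G + π² (∂_y G)⁻⁴ ∂_y² G = 0` at every point of `R`. -/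
def SatisfiesE (G : ℝ × ℝ → ℝ) (R : Set (ℝ × ℝ)) : Prop :=
  ∀ z ∈ R, pdX G z ≠ 0 ∧
    pdT (pdT G) z + π ^ 2 * ((pdX G z) ^ 4)⁻¹ * pdX (pdX G) z = 0

/-- Admissible functions on `R`: continuous on `closure R`, differentiable on `R`, with
strictly negative partial derivative in the second variable. -/
def Adm (F : ℝ × ℝ → ℝ) (R : Set (ℝ × ℝ)) : Prop :=
  ContinuousOn F (closure R) ∧ DifferentiableOn ℝ F R ∧ ∀ z ∈ R, pdX F z < 0

/-- `ε`-admissible functions on `R`: the partial derivative in the second variable lies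
strictly between `-ε⁻¹` and `-ε`. -/
def AdmE (ε : ℝ) (F : ℝ × ℝ → ℝ) (R : Set (ℝ × ℝ)) : Prop :=
  ContinuousOn F (closure R) ∧ DifferentiableOn ℝ F R ∧
    ∀ z ∈ R, -ε⁻¹ < pdX F z ∧ pdX F z < -ε

/-- The `C^m` norm `∑_{j=0}^m max_{i ≤ j} sup_{z ∈ R} |∂_t^i ∂_x^{j-i} F(z)|`,
valued in `ℝ≥0∞`. -/
def CmNorm (m : ℕ) (F : ℝ × ℝ → ℝ) (R : Set (ℝ × ℝ)) : ℝ≥0∞ :=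
  ∑ j ∈ Finset.range (m + 1),
    ⨆ i ∈ Finset.range (j + 1), ⨆ z ∈ R, ENNReal.ofReal |pdIter F i (j - i) z|

/-- The one-dimensional `C^m` norm `∑_{j=0}^m sup_{x ∈ S} |f^{(j)}(x)|`, valued in `ℝ≥0∞`. -/
def CmNorm1 (m : ℕ) (f : ℝ → ℝ) (S : Set ℝ) : ℝ≥0∞ :=
  ∑ j ∈ Finset.range (m + 1), ⨆ x ∈ S, ENNReal.ofReal |deriv^[j] f x|

/-- `R` has `C^k` boundary. -/
def HasCkBoundary (k : ℕ) (R : Set (ℝ × ℝ)) : Prop :=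
  ∀ z₀ ∈ frontier R, ∃ (r : ℝ) (ψ ψinv : ℝ × ℝ → ℝ × ℝ), 0 < r ∧
    Set.InjOn ψ (Metric.ball z₀ r) ∧
    (∀ w ∈ Metric.ball z₀ r ∩ R, 0 < (ψ w).1) ∧
    (∀ w ∈ Metric.ball z₀ r ∩ frontier R, (ψ w).1 = 0) ∧
    ContDiffOn ℝ k ψ (Metric.ball z₀ r) ∧
    ContDiffOn ℝ k ψinv (ψ '' (Metric.ball z₀ r ∩ R)) ∧
    ∀ w ∈ Metric.ball z₀ r, ψinv (ψ w) = w

/-- The set `𝔇_r = {z ∈ R : dist(z, ∂R ∖ ∂R') > r}`. -/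
def Dset (r : ℝ) (R R' : Set (ℝ × ℝ)) : Set (ℝ × ℝ) :=
  {z ∈ R | ENNReal.ofReal r < EMetric.infEdist z (frontier R \ frontier R')}



lemma hasDerivAt_partT {F : ℝ × ℝ → ℝ} {z : ℝ × ℝ} (h : DifferentiableAt ℝ F z) :
    HasDerivAt (fun s => F (s, z.2)) (fderiv ℝ F z (1, 0)) z.1 := by
  have h1 : HasDerivAt (fun s : ℝ => ((s, z.2) : ℝ × ℝ)) (1, 0) z.1 :=
    (hasDerivAt_id z.1).prodMk (hasDerivAt_const z.1 z.2)
  exact h.hasFDerivAt.comp_hasDerivAt z.1 h1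

lemma hasDerivAt_partX {F : ℝ × ℝ → ℝ} {z : ℝ × ℝ} (h : DifferentiableAt ℝ F z) :
    HasDerivAt (fun s => F (z.1, s)) (fderiv ℝ F z (0, 1)) z.2 := by
  have h1 : HasDerivAt (fun s : ℝ => ((z.1, s) : ℝ × ℝ)) (0, 1) z.2 :=
    (hasDerivAt_const z.2 z.1).prodMk (hasDerivAt_id z.2)
  exact h.hasFDerivAt.comp_hasDerivAt z.2 h1

lemma pdT_eq {F : ℝ × ℝ → ℝ} {z : ℝ × ℝ} (h : DifferentiableAt ℝ F z) :
    pdT F z = fderiv ℝ F z (1, 0) := by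
  have h1 : HasDerivAt (fun s : ℝ => ((s, z.2) : ℝ × ℝ)) (1, 0) z.1 :=
    (hasDerivAt_id z.1).prodMk (hasDerivAt_const z.1 z.2)
  exact (h.hasFDerivAt.comp_hasDerivAt z.1 h1).deriv

lemma pdX_eq {F : ℝ × ℝ → ℝ} {z : ℝ × ℝ} (h : DifferentiableAt ℝ F z) :
    pdX F z = fderiv ℝ F z (0, 1) := by
  have h1 : HasDerivAt (fun s : ℝ => ((z.1, s) : ℝ × ℝ)) (0, 1) z.2 :=
    (hasDerivAt_const z.2 z.1).prodMk (hasDerivAt_id z.2)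
  exact (h.hasFDerivAt.comp_hasDerivAt z.2 h1).deriv

section
variable {F : ℝ × ℝ → ℝ} {U : Set (ℝ × ℝ)} {z : ℝ × ℝ}

lemma diffAt_of_c2 (hF : ContDiffOn ℝ 2 F U) (hU : IsOpen U) (hz : z ∈ U) :
    DifferentiableAt ℝ F z :=
  (hF.contDiffAt (hU.mem_nhds hz)).differentiableAt two_ne_zero

lemma hasFDerivAt_fderiv_of_c2 (hF : ContDiffOn ℝ 2 F U) (hU : IsOpen U) (hz : z ∈ U) :
    HasFDerivAt (fderiv ℝ F) (fderiv ℝ (fderiv ℝ F) z) z := by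
  have h1 : ContDiffAt ℝ 1 (fderiv ℝ F) z :=
    (hF.contDiffAt (hU.mem_nhds hz)).fderiv_right (by norm_num)
  exact (h1.differentiableAt one_ne_zero).hasFDerivAt

lemma hasDerivAt_fderiv_partT
    (h : HasFDerivAt (fderiv ℝ F) (fderiv ℝ (fderiv ℝ F) z) z) (v : ℝ × ℝ) :
    HasDerivAt (fun s => fderiv ℝ F (s, z.2) v) (fderiv ℝ (fderiv ℝ F) z (1, 0) v) z.1 := by
  have h1 : HasDerivAt (fun s : ℝ => ((s, z.2) : ℝ × ℝ)) (1, 0) z.1 :=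
    (hasDerivAt_id z.1).prodMk (hasDerivAt_const z.1 z.2)
  have h2 : HasDerivAt (fun s : ℝ => fderiv ℝ F (s, z.2)) (fderiv ℝ (fderiv ℝ F) z (1, 0)) z.1 :=
    h.comp_hasDerivAt z.1 h1
  simpa using h2.clm_apply (hasDerivAt_const z.1 v)

lemma hasDerivAt_fderiv_partX
    (h : HasFDerivAt (fderiv ℝ F) (fderiv ℝ (fderiv ℝ F) z) z) (v : ℝ × ℝ) :
    HasDerivAt (fun s => fderiv ℝ F (z.1, s) v) (fderiv ℝ (fderiv ℝ F) z (0, 1) v) z.2 := by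
  have h1 : HasDerivAt (fun s : ℝ => ((z.1, s) : ℝ × ℝ)) (0, 1) z.2 :=
    (hasDerivAt_const z.2 z.1).prodMk (hasDerivAt_id z.2)
  have h2 : HasDerivAt (fun s : ℝ => fderiv ℝ F (z.1, s)) (fderiv ℝ (fderiv ℝ F) z (0, 1)) z.2 :=
    h.comp_hasDerivAt z.2 h1
  simpa using h2.clm_apply (hasDerivAt_const z.2 v)

lemma evT (hU : IsOpen U) (hz : z ∈ U) : ∀ᶠ s in nhds z.1, ((s, z.2) : ℝ × ℝ) ∈ U := by
  have hc : ContinuousAt (fun s : ℝ => ((s, z.2) : ℝ × ℝ)) z.1 :=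
    (continuous_id.prodMk continuous_const).continuousAt
  exact hc (hU.mem_nhds hz)

lemma evX (hU : IsOpen U) (hz : z ∈ U) : ∀ᶠ s in nhds z.2, ((z.1, s) : ℝ × ℝ) ∈ U := by
  have hc : ContinuousAt (fun s : ℝ => ((z.1, s) : ℝ × ℝ)) z.2 :=
    (continuous_const.prodMk continuous_id).continuousAt
  exact hc (hU.mem_nhds hz)

lemma pdT_pdT_eq (hF : ContDiffOn ℝ 2 F U) (hU : IsOpen U) (hz : z ∈ U) :
    pdT (pdT F) z = fderiv ℝ (fderiv ℝ F) z (1, 0) (1, 0) := by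
  have hev : (fun s => pdT F (s, z.2)) =ᶠ[nhds z.1] fun s => fderiv ℝ F (s, z.2) (1, 0) := by
    filter_upwards [evT hU hz] with s hs
    exact pdT_eq (diffAt_of_c2 hF hU hs)
  show deriv (fun s => pdT F (s, z.2)) z.1 = _
  rw [hev.deriv_eq]
  exact (hasDerivAt_fderiv_partT (hasFDerivAt_fderiv_of_c2 hF hU hz) (1, 0)).deriv

lemma pdT_pdX_eq (hF : ContDiffOn ℝ 2 F U) (hU : IsOpen U) (hz : z ∈ U) :
    pdT (pdX F) z = fderiv ℝ (fderiv ℝ F) z (1, 0) (0, 1) := by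
  have hev : (fun s => pdX F (s, z.2)) =ᶠ[nhds z.1] fun s => fderiv ℝ F (s, z.2) (0, 1) := by
    filter_upwards [evT hU hz] with s hs
    exact pdX_eq (diffAt_of_c2 hF hU hs)
  show deriv (fun s => pdX F (s, z.2)) z.1 = _
  rw [hev.deriv_eq]
  exact (hasDerivAt_fderiv_partT (hasFDerivAt_fderiv_of_c2 hF hU hz) (0, 1)).deriv

lemma pdX_pdX_eq (hF : ContDiffOn ℝ 2 F U) (hU : IsOpen U) (hz : z ∈ U) :
    pdX (pdX F) z = fderiv ℝ (fderiv ℝ F) z (0, 1) (0, 1) := by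
  have hev : (fun s => pdX F (z.1, s)) =ᶠ[nhds z.2] fun s => fderiv ℝ F (z.1, s) (0, 1) := by
    filter_upwards [evX hU hz] with s hs
    exact pdX_eq (diffAt_of_c2 hF hU hs)
  show deriv (fun s => pdX F (z.1, s)) z.2 = _
  rw [hev.deriv_eq]
  exact (hasDerivAt_fderiv_partX (hasFDerivAt_fderiv_of_c2 hF hU hz) (0, 1)).deriv

end

theorem statement2 (Ω Ω' : Set (ℝ × ℝ)) (hΩ : IsOpen Ω) (hΩ' : IsOpen Ω')
    (H G : ℝ × ℝ → ℝ) (hH : ContDiffOn ℝ 2 H Ω) (hG : ContDiffOn ℝ 2 G Ω')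
    (hmem : ∀ z ∈ Ω', (z.1, G z) ∈ Ω)
    (hinv : ∀ z ∈ Ω', H (z.1, G z) = z.2)
    (hB : ∀ z ∈ Ω', BExpr H (z.1, G z) = 0) :
    SatisfiesE G Ω' := by
  -- first-order identities at every point of Ω'
  have I1 : ∀ w ∈ Ω', fderiv ℝ H (w.1, G w) (0, 1) * fderiv ℝ G w (0, 1) = 1 := by
    intro w hw
    have hGw : DifferentiableAt ℝ G w := diffAt_of_c2 hG hΩ' hw
    have hq : (w.1, G w) ∈ Ω := hmem w hw
    have hpath : HasDerivAt (fun y : ℝ => ((w.1, G (w.1, y)) : ℝ × ℝ))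
        (0, fderiv ℝ G w (0, 1)) w.2 :=
      (hasDerivAt_const w.2 w.1).prodMk (hasDerivAt_partX hGw)
    have hcomp : HasDerivAt (fun y => H (w.1, G (w.1, y)))
        (fderiv ℝ H (w.1, G w) (0, fderiv ℝ G w (0, 1))) w.2 :=
      (diffAt_of_c2 hH hΩ hq).hasFDerivAt.comp_hasDerivAt w.2 hpath
    have hev : (fun y => H (w.1, G (w.1, y))) =ᶠ[nhds w.2] fun y => y := by
      filter_upwards [evX hΩ' hw] with y hy
      exact hinv (w.1, y) hy
    have h1 : HasDerivAt (fun y : ℝ => y)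
        (fderiv ℝ H (w.1, G w) (0, fderiv ℝ G w (0, 1))) w.2 :=
      hcomp.congr_of_eventuallyEq hev.symm
    have huniq : fderiv ℝ H (w.1, G w) (0, fderiv ℝ G w (0, 1)) = 1 :=
      h1.unique (hasDerivAt_id w.2)
    have hsm : ((0 : ℝ), fderiv ℝ G w (0, 1)) = fderiv ℝ G w (0, 1) • ((0 : ℝ), (1 : ℝ)) := by
      simp
    rw [hsm, ContinuousLinearMap.map_smul, smul_eq_mul] at huniq
    linarith [huniq]
  have I2 : ∀ w ∈ Ω', fderiv ℝ H (w.1, G w) (1, 0)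
      + fderiv ℝ H (w.1, G w) (0, 1) * fderiv ℝ G w (1, 0) = 0 := by
    intro w hw
    have hGw : DifferentiableAt ℝ G w := diffAt_of_c2 hG hΩ' hw
    have hq : (w.1, G w) ∈ Ω := hmem w hw
    have hpath : HasDerivAt (fun s : ℝ => ((s, G (s, w.2)) : ℝ × ℝ))
        (1, fderiv ℝ G w (1, 0)) w.1 :=
      (hasDerivAt_id w.1).prodMk (hasDerivAt_partT hGw)
    have hcomp : HasDerivAt (fun s => H (s, G (s, w.2)))
        (fderiv ℝ H (w.1, G w) (1, fderiv ℝ G w (1, 0))) w.1 :=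
      (diffAt_of_c2 hH hΩ hq).hasFDerivAt.comp_hasDerivAt w.1 hpath
    have hev : (fun s => H (s, G (s, w.2))) =ᶠ[nhds w.1] fun _ => w.2 := by
      filter_upwards [evT hΩ' hw] with s hs
      exact hinv (s, w.2) hs
    have h1 : HasDerivAt (fun _ : ℝ => w.2)
        (fderiv ℝ H (w.1, G w) (1, fderiv ℝ G w (1, 0))) w.1 :=
      hcomp.congr_of_eventuallyEq hev.symm
    have huniq : fderiv ℝ H (w.1, G w) (1, fderiv ℝ G w (1, 0)) = 0 :=
      h1.unique (hasDerivAt_const w.1 w.2)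
    have hsm : ((1 : ℝ), fderiv ℝ G w (1, 0))
        = ((1 : ℝ), (0 : ℝ)) + fderiv ℝ G w (1, 0) • ((0 : ℝ), (1 : ℝ)) := by simp
    rw [hsm, ContinuousLinearMap.map_add, ContinuousLinearMap.map_smul, smul_eq_mul] at huniq
    linarith [huniq]
  -- now fix a point z ∈ Ω'
  intro z hz
  have hpΩ : (z.1, G z) ∈ Ω := hmem z hz
  have hGdz : DifferentiableAt ℝ G z := diffAt_of_c2 hG hΩ' hz
  have hHdp : DifferentiableAt ℝ H (z.1, G z) := diffAt_of_c2 hH hΩ hpΩ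
  have hddG : HasFDerivAt (fderiv ℝ G) (fderiv ℝ (fderiv ℝ G) z) z :=
    hasFDerivAt_fderiv_of_c2 hG hΩ' hz
  have hddH : HasFDerivAt (fderiv ℝ H) (fderiv ℝ (fderiv ℝ H) (z.1, G z)) (z.1, G z) :=
    hasFDerivAt_fderiv_of_c2 hH hΩ hpΩ
  set p : ℝ × ℝ := (z.1, G z) with hp
  set a : ℝ := fderiv ℝ H p (1, 0) with ha
  set b : ℝ := fderiv ℝ H p (0, 1) with hbdef
  set gt : ℝ := fderiv ℝ G z (1, 0) with hgt
  set gy : ℝ := fderiv ℝ G z (0, 1) with hgydef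
  set A : ℝ := fderiv ℝ (fderiv ℝ H) p (1, 0) (1, 0) with hA
  set Bm : ℝ := fderiv ℝ (fderiv ℝ H) p (1, 0) (0, 1) with hBm
  set C : ℝ := fderiv ℝ (fderiv ℝ H) p (0, 1) (0, 1) with hC
  set At : ℝ := fderiv ℝ (fderiv ℝ G) z (1, 0) (1, 0) with hAt
  set Ct : ℝ := fderiv ℝ (fderiv ℝ G) z (0, 1) (0, 1) with hCt
  -- Schwarz symmetry of the second derivative of H at p
  have hsym : fderiv ℝ (fderiv ℝ H) p (0, 1) (1, 0) = Bm := by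
    have hev : ∀ᶠ w in nhds p, HasFDerivAt H (fderiv ℝ H w) w := by
      filter_upwards [hΩ.mem_nhds hpΩ] with w hw
      exact (diffAt_of_c2 hH hΩ hw).hasFDerivAt
    exact second_derivative_symmetric_of_eventually hev hddH (0, 1) (1, 0)
  -- second-order identity in the x (y) direction
  have e1 : gy * C * gy + b * Ct = 0 := by
    have hpath : HasDerivAt (fun y : ℝ => ((z.1, G (z.1, y)) : ℝ × ℝ)) (0, gy) z.2 :=
      (hasDerivAt_const z.2 z.1).prodMk (hasDerivAt_partX hGdz)
    have u1 : HasDerivAt (fun y => fderiv ℝ H (z.1, G (z.1, y)) (0, 1))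
        (fderiv ℝ (fderiv ℝ H) p (0, gy) (0, 1)) z.2 := by
      have h2 : HasDerivAt (fun y => fderiv ℝ H (z.1, G (z.1, y)))
          (fderiv ℝ (fderiv ℝ H) p (0, gy)) z.2 := hddH.comp_hasDerivAt z.2 hpath
      simpa using h2.clm_apply (hasDerivAt_const z.2 ((0 : ℝ), (1 : ℝ)))
    have u2 : HasDerivAt (fun y => fderiv ℝ G (z.1, y) (0, 1)) Ct z.2 :=
      hasDerivAt_fderiv_partX hddG (0, 1)
    have hprod := u1.mul u2
    have hev : (fun y => fderiv ℝ H (z.1, G (z.1, y)) (0, 1) * fderiv ℝ G (z.1, y) (0, 1))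
        =ᶠ[nhds z.2] fun _ => (1 : ℝ) := by
      filter_upwards [evX hΩ' hz] with y hy
      exact I1 (z.1, y) hy
    have h0 := hprod.congr_of_eventuallyEq hev.symm
    have huniq := h0.unique (hasDerivAt_const z.2 (1 : ℝ))
    have hsm : ((0 : ℝ), gy) = gy • ((0 : ℝ), (1 : ℝ)) := by simp
    rw [hsm, ContinuousLinearMap.map_smul] at huniq
    simp only [ContinuousLinearMap.smul_apply, smul_eq_mul] at huniq
    -- huniq : gy * C * gy + b * Ct = 0 (up to defeq of the point)
    linarith [huniq]
  -- second-order identity in the t direction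
  have e2 : (A + gt * Bm) + (Bm + gt * C) * gt + b * At = 0 := by
    have hpath : HasDerivAt (fun s : ℝ => ((s, G (s, z.2)) : ℝ × ℝ)) (1, gt) z.1 :=
      (hasDerivAt_id z.1).prodMk (hasDerivAt_partT hGdz)
    have hdd2 : HasDerivAt (fun s => fderiv ℝ H (s, G (s, z.2)))
        (fderiv ℝ (fderiv ℝ H) p (1, gt)) z.1 := hddH.comp_hasDerivAt z.1 hpath
    have v1 : HasDerivAt (fun s => fderiv ℝ H (s, G (s, z.2)) (1, 0))
        (fderiv ℝ (fderiv ℝ H) p (1, gt) (1, 0)) z.1 := by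
      simpa using hdd2.clm_apply (hasDerivAt_const z.1 ((1 : ℝ), (0 : ℝ)))
    have v2 : HasDerivAt (fun s => fderiv ℝ H (s, G (s, z.2)) (0, 1))
        (fderiv ℝ (fderiv ℝ H) p (1, gt) (0, 1)) z.1 := by
      simpa using hdd2.clm_apply (hasDerivAt_const z.1 ((0 : ℝ), (1 : ℝ)))
    have v3 : HasDerivAt (fun s => fderiv ℝ G (s, z.2) (1, 0)) At z.1 :=
      hasDerivAt_fderiv_partT hddG (1, 0)
    have hsum := v1.add (v2.mul v3)
    have hev : (fun s => fderiv ℝ H (s, G (s, z.2)) (1, 0)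
        + fderiv ℝ H (s, G (s, z.2)) (0, 1) * fderiv ℝ G (s, z.2) (1, 0))
        =ᶠ[nhds z.1] fun _ => (0 : ℝ) := by
      filter_upwards [evT hΩ' hz] with s hs
      exact I2 (s, z.2) hs
    have h0 := hsum.congr_of_eventuallyEq hev.symm
    have huniq := h0.unique (hasDerivAt_const z.1 (0 : ℝ))
    have hsm : ((1 : ℝ), gt) = ((1 : ℝ), (0 : ℝ)) + gt • ((0 : ℝ), (1 : ℝ)) := by simp
    rw [hsm, ContinuousLinearMap.map_add, ContinuousLinearMap.map_smul] at huniq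
    simp only [ContinuousLinearMap.add_apply, ContinuousLinearMap.smul_apply,
      smul_eq_mul] at huniq
    rw [hsym] at huniq
    linarith [huniq]
  -- the two first-order identities at z
  have i1 : b * gy = 1 := I1 z hz
  have i2 : a + b * gt = 0 := by
    have := I2 z hz
    linarith [this]
  -- the equation (B) at p, rewritten
  have hBz : b ^ 2 * A - 2 * a * b * Bm + (a ^ 2 + π ^ 2 * b ^ 4) * C = 0 := by
    have h := hB z hz
    rw [BExpr] at h
    rw [pdX_eq hHdp, pdT_eq hHdp, pdT_pdT_eq hH hΩ hpΩ, pdT_pdX_eq hH hΩ hpΩ,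
      pdX_pdX_eq hH hΩ hpΩ] at h
    linarith [h]
  have hb : b ≠ 0 := by
    intro h
    rw [h] at i1
    simp at i1
  have hgy : gy ≠ 0 := by
    intro h
    rw [h] at i1
    simp at i1
  -- conclude
  rw [pdX_eq hGdz, pdT_pdT_eq hG hΩ' hz, pdX_pdX_eq hG hΩ' hz]
  refine ⟨hgy, ?_⟩
  have hgyb : gy = b⁻¹ := by
    field_simp
    linear_combination i1
  have key : b ^ 3 * At + π ^ 2 * b ^ 7 * Ct = 0 := by
    linear_combination b ^ 2 * e2 + π ^ 2 * b ^ 6 * e1 - hBz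
      - (2 * b * Bm + (b * gt - a) * C) * i2 - π ^ 2 * b ^ 4 * C * (b * gy + 1) * i1
  have hb3 : (b : ℝ) ^ 3 ≠ 0 := pow_ne_zero _ hb
  have hfin : b ^ 3 * (At + π ^ 2 * b ^ 4 * Ct) = 0 := by linear_combination key
  have : At + π ^ 2 * b ^ 4 * Ct = 0 := (mul_eq_zero.mp hfin).resolve_left hb3
  rw [← hgydef, ← hAt, ← hCt, hgyb]
  calc At + π ^ 2 * ((b⁻¹) ^ 4)⁻¹ * Ct = At + π ^ 2 * b ^ 4 * Ct := by
        rw [← inv_pow, inv_inv]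
    _ = 0 := this
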